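/- For every δ ∈ (0,2) there exists a real Banach space X such that every finite convex combination of slices of B_X has diameter at least δ, but for every ε > 0 there exists a slice S of B_X with diam(S) ≤ δ + ε. -/

import Mathlib

open Metric Set

noncomputable section

variable (X : Type*) [NormedAddCommGroup X] [NormedSpace ℝ X]

/-- A subset `U` of `X` is weakly open if it is open in the weak topology of `X`. -/
def IsWeaklyOpen (U : Set X) : Prop := IsOpen (toWeakSpace ℝ X '' U)

/-- The slice `S(B_X, f, α) = {x ∈ B_X : f x > 1 - α}` of the closed unit ball of `X`. -/
def sliceSet (f : X →L[ℝ] ℝ) (α : ℝ) : Set X :=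
  {y ∈ closedBall (0 : X) 1 | 1 - α < f y}

/-- `S` is a slice of the closed unit ball of `X`, i.e. `S = S(B_X, f, α)` for some norm-one
functional `f` and some `α > 0`. -/
def IsSlice (S : Set X) : Prop :=
  ∃ f : X →L[ℝ] ℝ, ‖f‖ = 1 ∧ ∃ α > (0 : ℝ), S = sliceSet X f α

/-- The Daugavet index of thickness `𝒯ˢ(X)`: the infimum of all `r > 0` such that some slice of
the closed unit ball is contained in a closed ball of radius `r` centered at a point of the unit
sphere. -/
def Ts : ℝ :=
  sInf {r : ℝ | 0 < r ∧ ∃ x : X, ‖x‖ = 1 ∧ ∃ S : Set X, IsSlice X S ∧ S ⊆ closedBall x r}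

/-- `W` is a nonempty relatively weakly open subset of the closed unit ball of `X`. -/
def IsRelWeakOpen (W : Set X) : Prop :=
  W.Nonempty ∧ ∃ U : Set X, IsWeaklyOpen X U ∧ W = closedBall (0 : X) 1 ∩ U

/-- The Daugavet index of thickness `𝒯(X)`: the infimum of all `r > 0` such that some nonempty
relatively weakly open subset of the closed unit ball is contained in a closed ball of radius `r`
centered at a point of the unit sphere. -/
def Tw : ℝ :=
  sInf {r : ℝ | 0 < r ∧ ∃ x : X, ‖x‖ = 1 ∧ ∃ W : Set X, IsRelWeakOpen X W ∧
    W ⊆ closedBall x r}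

/-- The convex combination `∑ i, l i • W i` of the sets `W i` (the set of all sums
`∑ i, l i • w i` with `w i ∈ W i`). -/
def comboSet {n : ℕ} (l : Fin n → ℝ) (W : Fin n → Set X) : Set X :=
  {z : X | ∃ w : Fin n → X, (∀ i, w i ∈ W i) ∧ z = ∑ i, l i • w i}

/-- The Daugavet index of thickness `𝒯ᶜᶜ(X)`: the infimum of all `r > 0` such that some convex
combination of nonempty relatively weakly open subsets of the closed unit ball is contained in a
closed ball of radius `r` centered at a point of the unit sphere. -/
def Tcc : ℝ :=
  sInf {r : ℝ | 0 < r ∧ ∃ x : X, ‖x‖ = 1 ∧ ∃ (n : ℕ) (l : Fin n → ℝ) (W : Fin n → Set X),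
    (∀ i, 0 ≤ l i) ∧ (∑ i, l i) = 1 ∧ (∀ i, IsRelWeakOpen X (W i)) ∧
    comboSet X l W ⊆ closedBall x r}

/-- `X` has the Daugavet property: for every `x` in the unit sphere, every `ε > 0` and every
slice `S` of the closed unit ball there exists `y ∈ S` with `‖x - y‖ ≥ 2 - ε`. -/
def DaugavetProperty : Prop :=
  ∀ x : X, ‖x‖ = 1 → ∀ ε > (0 : ℝ), ∀ S : Set X, IsSlice X S → ∃ y ∈ S, 2 - ε ≤ ‖x - y‖

section MyConstruction
open ENNReal Filter


abbrev Eseq : Type := lp (fun _ : ℕ => ℝ) ∞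

def Xsp (δ : ℝ) : Type := ℝ × Eseq

instance (δ : ℝ) : AddCommGroup (Xsp δ) := inferInstanceAs (AddCommGroup (ℝ × Eseq))

instance (δ : ℝ) : Module ℝ (Xsp δ) := inferInstanceAs (Module ℝ (ℝ × Eseq))

noncomputable instance Xsp.normedAddCommGroup (δ : ℝ) : NormedAddCommGroup (Xsp δ) :=
  AddGroupNorm.toNormedAddCommGroup
  { toFun := fun p => max |p.1| (max (1 - δ/2) 0 * |p.1| + ‖p.2‖)
    map_zero' := by
      show max |(0:ℝ)| (max (1 - δ/2) 0 * |(0:ℝ)| + ‖(0:Eseq)‖) = 0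
      rw [abs_zero, norm_zero, mul_zero, add_zero, max_self]
    add_le' := by
      intro p q
      have h1 : |(p + q).1| ≤ |p.1| + |q.1| := abs_add_le _ _
      have h2 : ‖(p + q).2‖ ≤ ‖p.2‖ + ‖q.2‖ := norm_add_le _ _
      have hc : (0:ℝ) ≤ max (1 - δ/2) 0 := le_max_right _ _
      beta_reduce
      refine max_le (h1.trans (add_le_add (le_max_left _ _) (le_max_left _ _))) ?_
      calc max (1 - δ/2) 0 * |(p+q).1| + ‖(p+q).2‖
          ≤ max (1 - δ/2) 0 * (|p.1| + |q.1|) + (‖p.2‖ + ‖q.2‖) :=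
            add_le_add (mul_le_mul_of_nonneg_left h1 hc) h2
        _ = (max (1 - δ/2) 0 * |p.1| + ‖p.2‖) + (max (1 - δ/2) 0 * |q.1| + ‖q.2‖) := by ring
        _ ≤ _ := add_le_add (le_max_right _ _) (le_max_right _ _)
    neg' := by
      intro p
      have h1 : |(-p).1| = |p.1| := abs_neg _
      have h2 : ‖(-p).2‖ = ‖p.2‖ := norm_neg _
      beta_reduce
      rw [h1, h2]
    eq_zero_of_map_eq_zero' := by
      intro p hp
      beta_reduce at hp
      have hc : (0:ℝ) ≤ max (1 - δ/2) 0 := le_max_right _ _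
      have h1 : |p.1| ≤ 0 := le_of_max_le_left hp.le
      have h2 : max (1 - δ/2) 0 * |p.1| + ‖p.2‖ ≤ 0 := le_of_max_le_right hp.le
      have h1' : p.1 = 0 := abs_eq_zero.mp (le_antisymm h1 (abs_nonneg _))
      have h2' : ‖p.2‖ = 0 := by
        have := mul_nonneg hc (abs_nonneg p.1)
        nlinarith [norm_nonneg p.2]
      have : p.2 = 0 := norm_eq_zero.mp h2'
      exact Prod.ext h1' this }

theorem Xsp.norm_def (δ : ℝ) (x : Xsp δ) :
    ‖x‖ = max |x.1| (max (1 - δ/2) 0 * |x.1| + ‖x.2‖) := rfl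

instance Xsp.normedSpace (δ : ℝ) : NormedSpace ℝ (Xsp δ) where
  norm_smul_le := by
    intro r x
    have h1 : |(r • x).1| = |r| * |x.1| := abs_mul _ _
    have h2 : ‖(r • x).2‖ = |r| * ‖x.2‖ := by
      rw [show (r • x).2 = r • x.2 from rfl, norm_smul, Real.norm_eq_abs]
    rw [Xsp.norm_def, Xsp.norm_def, h1, h2, Real.norm_eq_abs]
    rw [mul_max_of_nonneg _ _ (abs_nonneg r)]
    apply max_le_max le_rfl
    apply le_of_eq
    ring

theorem Xsp.abs_fst_le (δ : ℝ) (x : Xsp δ) : |x.1| ≤ ‖x‖ := le_max_left _ _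

theorem Xsp.norm_snd_le (δ : ℝ) (x : Xsp δ) : ‖x.2‖ ≤ ‖x‖ := by
  refine le_trans ?_ (le_max_right _ _)
  have : (0:ℝ) ≤ max (1 - δ/2) 0 * |x.1| := mul_nonneg (le_max_right _ _) (abs_nonneg _)
  linarith

theorem Xsp.norm_le (δ : ℝ) (x : Xsp δ) :
    ‖x‖ ≤ (1 + max (1 - δ/2) 0) * |x.1| + ‖x.2‖ := by
  rw [Xsp.norm_def]
  have h0 : (0:ℝ) ≤ max (1 - δ/2) 0 := le_max_right _ _
  have ha := abs_nonneg x.1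
  have hn := norm_nonneg x.2
  apply max_le <;> nlinarith

instance Xsp.completeSpace (δ : ℝ) : CompleteSpace (Xsp δ) := by
  apply Metric.complete_of_cauchySeq_tendsto
  intro u hu
  have lip1 : LipschitzWith 1 (fun x : Xsp δ => x.1) := by
    apply LipschitzWith.of_dist_le_mul
    intro x y
    rw [NNReal.coe_one, one_mul, dist_eq_norm, dist_eq_norm]
    exact Xsp.abs_fst_le δ (x - y)
  have lip2 : LipschitzWith 1 (fun x : Xsp δ => x.2) := by
    apply LipschitzWith.of_dist_le_mul
    intro x y
    rw [NNReal.coe_one, one_mul, dist_eq_norm, dist_eq_norm]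
    exact Xsp.norm_snd_le δ (x - y)
  obtain ⟨a, ha⟩ := cauchySeq_tendsto_of_complete (lip1.uniformContinuous.comp_cauchySeq hu)
  obtain ⟨y, hy⟩ := cauchySeq_tendsto_of_complete (lip2.uniformContinuous.comp_cauchySeq hu)
  refine ⟨((a, y) : ℝ × Eseq), ?_⟩
  apply tendsto_iff_dist_tendsto_zero.mpr
  have ha' : Filter.Tendsto (fun n => |(u n).1 - a|) Filter.atTop (nhds 0) := by
    have := (tendsto_iff_dist_tendsto_zero).mp ha
    simpa only [Real.dist_eq, Function.comp_apply] using this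
  have hy' : Filter.Tendsto (fun n => ‖(u n).2 - y‖) Filter.atTop (nhds 0) := by
    have := (tendsto_iff_dist_tendsto_zero).mp hy
    simpa only [dist_eq_norm, Function.comp_apply] using this
  set v : Xsp δ := ((a, y) : ℝ × Eseq) with hv
  apply squeeze_zero (fun n => dist_nonneg)
    (g := fun n => (1 + max (1 - δ/2) 0) * |(u n).1 - a| + ‖(u n).2 - y‖)
  · intro n
    rw [dist_eq_norm]
    exact Xsp.norm_le δ (u n - v)
  · have h := ((ha'.const_mul (1 + max (1 - δ/2) 0)).add hy')
    rw [mul_zero, add_zero] at h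
    exact h

instance Xsp.nontrivial (δ : ℝ) : Nontrivial (Xsp δ) := by
  refine ⟨((0:ℝ), 0), ((1:ℝ), 0), fun h => ?_⟩
  have := congrArg Prod.fst h
  simpa using this

/-- basis vectors of `Eseq` -/
def ek (k : ℕ) : Eseq := lp.single ∞ k (1:ℝ)

theorem ek_apply (k j : ℕ) : ek k j = if j = k then 1 else 0 := by
  rw [ek, lp.single_apply]
  by_cases h : j = k
  · subst h; rw [Pi.single_eq_same, if_pos rfl]
  · rw [Pi.single_eq_of_ne h, if_neg h]

theorem norm_ek (k : ℕ) : ‖ek k‖ = 1 := by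
  apply le_antisymm
  · apply lp.norm_le_of_forall_le zero_le_one
    intro j
    rw [Real.norm_eq_abs, ek_apply]
    split
    · rw [abs_one]
    · rw [abs_zero]; exact zero_le_one
  · have h := lp.norm_apply_le_norm ENNReal.top_ne_zero (ek k) k
    rw [ek_apply, if_pos rfl, Real.norm_eq_abs, abs_one] at h
    exact h

/-- make an element of `Xsp δ` -/
def Xmk (δ : ℝ) (a : ℝ) (y : Eseq) : Xsp δ := ((a, y) : ℝ × Eseq)

@[simp] theorem Xmk_fst (δ : ℝ) (a : ℝ) (y : Eseq) : (Xmk δ a y).1 = a := rfl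
@[simp] theorem Xmk_snd (δ : ℝ) (a : ℝ) (y : Eseq) : (Xmk δ a y).2 = y := rfl

theorem Xmk_eta (δ : ℝ) (x : Xsp δ) : Xmk δ x.1 x.2 = x := rfl

theorem Xsp.cmax {δ : ℝ} (hδ : δ ≤ 2) : max (1 - δ/2) 0 = 1 - δ/2 :=
  max_eq_left (by linarith)

theorem Xmk_norm (δ : ℝ) (hδ : δ ≤ 2) (a : ℝ) (y : Eseq) :
    ‖Xmk δ a y‖ = max |a| ((1 - δ/2) * |a| + ‖y‖) := by
  rw [Xsp.norm_def, Xsp.cmax hδ, Xmk_fst, Xmk_snd]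

theorem Xsp.norm_inr (δ : ℝ) (y : Eseq) : ‖Xmk δ 0 y‖ = ‖y‖ := by
  rw [Xsp.norm_def, Xmk_fst, Xmk_snd, abs_zero, mul_zero, zero_add]
  exact max_eq_right (norm_nonneg y)

/-- the inclusion of `Eseq` into `Xsp δ` as a linear map -/
def inrL (δ : ℝ) : Eseq →ₗ[ℝ] Xsp δ where
  toFun y := Xmk δ 0 y
  map_add' y y' := by
    show ((0, y + y') : ℝ × Eseq) = ((0,y) : ℝ × Eseq) + ((0,y') : ℝ × Eseq)
    rw [Prod.mk_add_mk, add_zero]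
  map_smul' r y := by
    show ((0, r • y) : ℝ × Eseq) = r • ((0,y) : ℝ × Eseq)
    rw [Prod.smul_mk, smul_zero]

@[simp] theorem inrL_apply (δ : ℝ) (y : Eseq) : inrL δ y = Xmk δ 0 y := rfl

/-- the first-coordinate functional on `Xsp δ` -/
def fstL (δ : ℝ) : Xsp δ →L[ℝ] ℝ :=
  LinearMap.mkContinuous
    { toFun := fun x => x.1
      map_add' := fun _ _ => rfl
      map_smul' := fun _ _ => rfl } 1
    (fun x => by rw [one_mul, Real.norm_eq_abs]; exact Xsp.abs_fst_le δ x)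

@[simp] theorem fstL_apply (δ : ℝ) (x : Xsp δ) : fstL δ x = x.1 := rfl

theorem norm_fstL (δ : ℝ) (h0 : 0 ≤ δ) (h2 : δ ≤ 2) : ‖fstL δ‖ = 1 := by
  apply le_antisymm
  · exact LinearMap.mkContinuous_norm_le _ zero_le_one _
  · have hx : ‖Xmk δ 1 0‖ ≤ 1 := by
      rw [Xmk_norm δ h2, norm_zero, abs_one, mul_one, add_zero]
      apply max_le le_rfl (by linarith)
    have h := (fstL δ).unit_le_opNorm (Xmk δ 1 0) hx
    rw [fstL_apply, Xmk_fst, norm_one] at h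
    exact h

theorem tendsto_coord (δ : ℝ) (F : Xsp δ →L[ℝ] ℝ) :
    Filter.Tendsto (fun k => |F (inrL δ (ek k))|) Filter.atTop (nhds 0) := by
  set g : ℕ → ℝ := fun k => F (inrL δ (ek k)) with hg
  have hsum : Summable (fun k => |g k|) := by
    apply summable_of_sum_range_le (fun k => abs_nonneg _)
    intro N
    set σ : ℕ → ℝ := fun j => if g j < 0 then -1 else 1 with hσ
    set w : Eseq := ∑ j ∈ Finset.range N, σ j • ek j with hw
    have hwj : ∀ j', w j' = if j' ∈ Finset.range N then σ j' else 0 := by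
      intro j'
      rw [hw, lp.coeFn_sum, Finset.sum_apply]
      have : ∀ j ∈ Finset.range N, (σ j • ek j) j' = if j' = j then σ j else 0 := by
        intro j _
        rw [lp.coeFn_smul, Pi.smul_apply, smul_eq_mul, ek_apply, mul_ite, mul_one, mul_zero]
      rw [Finset.sum_congr rfl this, Finset.sum_ite_eq]
    have hwnorm : ‖w‖ ≤ 1 := by
      apply lp.norm_le_of_forall_le zero_le_one
      intro j'
      rw [Real.norm_eq_abs, hwj]
      split
      · rw [hσ]; dsimp only; split
        · rw [abs_neg, abs_one]
        · rw [abs_one]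
      · rw [abs_zero]; exact zero_le_one
    have hFw : F (inrL δ w) = ∑ j ∈ Finset.range N, |g j| := by
      have h1 : F (inrL δ w) = ∑ j ∈ Finset.range N, σ j * g j := by
        rw [hw, map_sum, map_sum]
        congr 1
        ext j
        rw [map_smul, map_smul, smul_eq_mul]
      rw [h1]
      congr 1
      ext j
      rw [hσ]
      dsimp only
      split
      · rename_i h; rw [abs_of_neg h]; ring
      · rename_i h; rw [abs_of_nonneg (not_lt.mp h), one_mul]
    calc ∑ j ∈ Finset.range N, |g j| = F (inrL δ w) := hFw.symm
      _ ≤ |F (inrL δ w)| := le_abs_self _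
      _ ≤ ‖F‖ * ‖inrL δ w‖ := F.le_opNorm _
      _ ≤ ‖F‖ * 1 := by
          apply mul_le_mul_of_nonneg_left _ (norm_nonneg F)
          rw [inrL_apply, Xsp.norm_inr]
          exact hwnorm
      _ = ‖F‖ := mul_one _
  exact hsum.tendsto_atTop_zero

theorem pert_norm_le {δ : ℝ} (h0 : 0 ≤ δ) (h2 : δ ≤ 2) (a : ℝ) (y : Eseq)
    (hx : ‖Xmk δ a y‖ ≤ 1) (k : ℕ) (τ : ℝ) (hτ : |τ| ≤ δ/2) :
    ‖Xmk δ a (y - y k • ek k + τ • ek k)‖ ≤ 1 := by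
  rw [Xmk_norm δ h2] at hx ⊢
  obtain ⟨ha, hay⟩ := max_le_iff.mp hx
  set z : Eseq := y - y k • ek k + τ • ek k with hz
  have hzj : ∀ j, z j = if j = k then τ else y j := by
    intro j
    rw [hz, lp.coeFn_add, lp.coeFn_sub]
    simp only [lp.coeFn_smul, Pi.add_apply, Pi.sub_apply, Pi.smul_apply, smul_eq_mul, ek_apply]
    by_cases h : j = k
    · subst h; simp
    · simp [h]
  have hznorm : ‖z‖ ≤ max ‖y‖ (δ/2) := by
    apply lp.norm_le_of_forall_le (le_max_of_le_left (norm_nonneg y))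
    intro j
    rw [Real.norm_eq_abs, hzj]
    split
    · exact le_max_of_le_right hτ
    · exact le_max_of_le_left (lp.norm_apply_le_norm ENNReal.top_ne_zero y j)
  apply max_le ha
  have hc : (0:ℝ) ≤ 1 - δ/2 := by linarith
  have h1 : (1 - δ/2) * |a| ≤ 1 - δ/2 := by
    nlinarith [abs_nonneg a]
  rcases max_le_iff.mp (le_refl (max ‖y‖ (δ/2))) with _
  rcases le_max_iff.mp (le_refl (max ‖y‖ (δ/2))) with h | h
  all_goals nlinarith [le_max_left ‖y‖ (δ/2), le_max_right ‖y‖ (δ/2)]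

theorem pert_apply (δ : ℝ) (F : Xsp δ →L[ℝ] ℝ) (a : ℝ) (y : Eseq) (k : ℕ) (τ : ℝ) :
    F (Xmk δ a (y - y k • ek k + τ • ek k))
      = F (Xmk δ a y) + (τ - y k) * F (inrL δ (ek k)) := by
  have key : Xmk δ a (y - y k • ek k + τ • ek k)
      = Xmk δ a y + (τ - y k) • inrL δ (ek k) := by
    refine Prod.ext ?_ ?_
    · show a = a + (τ - y k) • (0:ℝ)
      rw [smul_eq_mul, mul_zero, add_zero]
    · show y - y k • ek k + τ • ek k = y + (τ - y k) • ek k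
      rw [sub_smul]
      abel
  rw [key, map_add, map_smul, smul_eq_mul]

theorem slice_nonempty {Y : Type*} [NormedAddCommGroup Y] [NormedSpace ℝ Y]
    (f : Y →L[ℝ] ℝ) (hf : ‖f‖ = 1) {α : ℝ} (hα : 0 < α) :
    ∃ x : Y, ‖x‖ ≤ 1 ∧ 1 - α < f x := by
  have hr : 1 - min α 1 < ‖f‖ := by
    rw [hf]
    have : 0 < min α 1 := lt_min hα one_pos
    linarith
  obtain ⟨x, hx1, hx2⟩ := f.exists_lt_apply_of_lt_opNorm hr
  rw [Real.norm_eq_abs] at hx2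
  have hmin : 1 - α ≤ 1 - min α 1 := by
    have := min_le_left α 1
    linarith
  rcases le_or_gt 0 (f x) with h' | h'
  · refine ⟨x, hx1.le, ?_⟩
    rw [abs_of_nonneg h'] at hx2
    linarith
  · refine ⟨-x, by rw [norm_neg]; exact hx1.le, ?_⟩
    rw [map_neg]
    rw [abs_of_neg h'] at hx2
    linarith

end MyConstruction

theorem small_slice (δ : ℝ) (h0 : 0 < δ) (h2 : δ < 2) {ε : ℝ} (hε : 0 < ε) :
    ∃ S : Set (Xsp δ), IsSlice (Xsp δ) S ∧ Metric.diam S ≤ δ + ε := by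
  refine ⟨sliceSet (Xsp δ) (fstL δ) (ε/3),
    ⟨fstL δ, norm_fstL δ h0.le h2.le, ε/3, by linarith, rfl⟩, ?_⟩
  apply Metric.diam_le_of_forall_dist_le (by linarith)
  intro u hu v hv
  obtain ⟨hu1, hu2⟩ := hu
  obtain ⟨hv1, hv2⟩ := hv
  rw [fstL_apply] at hu2 hv2
  have hu1' : ‖u‖ ≤ 1 := mem_closedBall_zero_iff.mp hu1
  have hv1' : ‖v‖ ≤ 1 := mem_closedBall_zero_iff.mp hv1
  rw [Xsp.norm_def, Xsp.cmax h2.le] at hu1' hv1'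
  obtain ⟨hua, huy⟩ := max_le_iff.mp hu1'
  obtain ⟨hva, hvy⟩ := max_le_iff.mp hv1'
  have hc0 : (0:ℝ) ≤ 1 - δ/2 := by linarith
  have hc1 : (1:ℝ) - δ/2 ≤ 1 := by linarith
  have hu1le : u.1 ≤ 1 := le_trans (le_abs_self _) hua
  have hv1le : v.1 ≤ 1 := le_trans (le_abs_self _) hva
  have habs : |u.1 - v.1| ≤ ε/3 := by
    rw [abs_le]
    constructor <;> [linarith; linarith]
  rw [dist_eq_norm, Xsp.norm_def, Xsp.cmax h2.le]
  have hfst : (u - v).1 = u.1 - v.1 := rfl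
  have hsnd : (u - v).2 = u.2 - v.2 := rfl
  rw [hfst, hsnd]
  have hny : ‖u.2 - v.2‖ ≤ ‖u.2‖ + ‖v.2‖ := norm_sub_le _ _
  have hcu : (1 - δ/2) * u.1 ≤ (1 - δ/2) * |u.1| :=
    mul_le_mul_of_nonneg_left (le_abs_self _) hc0
  have hcv : (1 - δ/2) * v.1 ≤ (1 - δ/2) * |v.1| :=
    mul_le_mul_of_nonneg_left (le_abs_self _) hc0
  apply max_le (by linarith)
  nlinarith [abs_nonneg (u.1 - v.1), norm_nonneg (u.2 - v.2)]

theorem big_diam (δ : ℝ) (h0 : 0 < δ) (h2 : δ < 2) (n : ℕ) (l : Fin n → ℝ)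
    (S : Fin n → Set (Xsp δ)) (hl : ∀ i, 0 ≤ l i) (hsum : (∑ i, l i) = 1)
    (hS : ∀ i, IsSlice (Xsp δ) (S i)) : δ ≤ Metric.diam (comboSet (Xsp δ) l S) := by
  choose f hf α hα hSS using hS
  choose x hx hfx using fun i => slice_nonempty (f i) (hf i) (hα i)
  set g : Fin n → ℕ → ℝ := fun i k => f i (inrL δ (ek k)) with hg
  have hm : ∀ i, 0 < f i (x i) - (1 - α i) := fun i => by linarith [hfx i]
  have hev : ∀ᶠ k in Filter.atTop, ∀ i, (δ/2 + 1) * |g i k| < f i (x i) - (1 - α i) := by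
    rw [Filter.eventually_all]
    intro i
    have h := (tendsto_coord δ (f i)).const_mul (δ/2 + 1)
    rw [mul_zero] at h
    exact h.eventually_lt_const (hm i)
  obtain ⟨k, hk⟩ := hev.exists
  -- membership of the perturbed points
  have hy1 : ∀ i, ‖(x i).2‖ ≤ 1 := by
    intro i
    have := hx i
    rw [← Xmk_eta δ (x i), Xmk_norm δ h2.le] at this
    have h2' := le_of_max_le_right this
    have : (0:ℝ) ≤ (1 - δ/2) * |(x i).1| :=
      mul_nonneg (by linarith) (abs_nonneg _)
    linarith
  have hmem : ∀ (τ : ℝ), |τ| ≤ δ/2 →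
      ∀ i, Xmk δ (x i).1 ((x i).2 - (x i).2 k • ek k + τ • ek k) ∈ S i := by
    intro τ hτ i
    rw [hSS i]
    constructor
    · apply mem_closedBall_zero_iff.mpr
      apply pert_norm_le h0.le h2.le _ _ _ k τ hτ
      rw [Xmk_eta]
      exact hx i
    · rw [pert_apply, Xmk_eta]
      have hyk : |(x i).2 k| ≤ 1 :=
        le_trans (lp.norm_apply_le_norm ENNReal.top_ne_zero (x i).2 k) (hy1 i)
      have habs : |(τ - (x i).2 k) * g i k| ≤ (δ/2 + 1) * |g i k| := by
        rw [abs_mul]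
        apply mul_le_mul_of_nonneg_right _ (abs_nonneg _)
        calc |τ - (x i).2 k| ≤ |τ| + |(x i).2 k| := abs_sub _ _
          _ ≤ δ/2 + 1 := add_le_add hτ hyk
      have hki := hk i
      have := neg_abs_le ((τ - (x i).2 k) * g i k)
      show 1 - α i < f i (x i) + (τ - (x i).2 k) * g i k
      linarith
  have hτp : |δ/2| ≤ δ/2 := by rw [abs_of_nonneg (by linarith)]
  have hτm : |(-(δ/2))| ≤ δ/2 := by rw [abs_neg, abs_of_nonneg (by linarith)]
  set up : Fin n → Xsp δ :=
    fun i => Xmk δ (x i).1 ((x i).2 - (x i).2 k • ek k + (δ/2) • ek k) with hup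
  set um : Fin n → Xsp δ :=
    fun i => Xmk δ (x i).1 ((x i).2 - (x i).2 k • ek k + (-(δ/2)) • ek k) with hum
  have hzp : (∑ i, l i • up i) ∈ comboSet (Xsp δ) l S :=
    ⟨up, fun i => hmem (δ/2) hτp i, rfl⟩
  have hzm : (∑ i, l i • um i) ∈ comboSet (Xsp δ) l S :=
    ⟨um, fun i => hmem (-(δ/2)) hτm i, rfl⟩
  -- the combo set is bounded
  have hsub : comboSet (Xsp δ) l S ⊆ closedBall (0 : Xsp δ) 1 := by
    rintro z ⟨w, hw, rfl⟩
    rw [mem_closedBall_zero_iff]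
    calc ‖∑ i, l i • w i‖ ≤ ∑ i, ‖l i • w i‖ := norm_sum_le _ _
      _ = ∑ i, l i * ‖w i‖ := by
          apply Finset.sum_congr rfl
          intro i _
          rw [norm_smul, Real.norm_eq_abs, abs_of_nonneg (hl i)]
      _ ≤ ∑ i, l i * 1 := by
          apply Finset.sum_le_sum
          intro i _
          apply mul_le_mul_of_nonneg_left _ (hl i)
          have hwi := hw i
          rw [hSS i] at hwi
          exact mem_closedBall_zero_iff.mp hwi.1
      _ = 1 := by simp only [mul_one]; exact hsum
  have hbdd : Bornology.IsBounded (comboSet (Xsp δ) l S) :=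
    (Metric.isBounded_closedBall).subset hsub
  -- the distance between the two combo points is δ
  have hdiff : ∀ i, up i - um i = Xmk δ 0 (δ • ek k) := by
    intro i
    refine Prod.ext ?_ ?_
    · show (x i).1 - (x i).1 = (0:ℝ)
      rw [sub_self]
    · show ((x i).2 - (x i).2 k • ek k + (δ/2) • ek k)
          - ((x i).2 - (x i).2 k • ek k + (-(δ/2)) • ek k) = δ • ek k
      module
  have hdist : dist (∑ i, l i • up i) (∑ i, l i • um i) = δ := by
    rw [dist_eq_norm, ← Finset.sum_sub_distrib]
    have h1 : ∀ i ∈ Finset.univ, l i • up i - l i • um i = l i • Xmk δ 0 (δ • ek k) := by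
      intro i _
      rw [← smul_sub, hdiff i]
    rw [Finset.sum_congr rfl h1, ← Finset.sum_smul, hsum, one_smul,
      Xsp.norm_inr, norm_smul, Real.norm_eq_abs, abs_of_nonneg h0.le, norm_ek, mul_one]
  calc δ = dist (∑ i, l i • up i) (∑ i, l i • um i) := hdist.symm
    _ ≤ Metric.diam (comboSet (Xsp δ) l S) := Metric.dist_le_diam_of_mem hbdd hzp hzm

theorem stmt_11 (δ : ℝ) (hδ₀ : 0 < δ) (hδ₂ : δ < 2) :
    ∃ (X : Type) (_ : NormedAddCommGroup X) (_ : NormedSpace ℝ X) (_ : CompleteSpace X)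
      (_ : Nontrivial X),
      (∀ (n : ℕ) (l : Fin n → ℝ) (S : Fin n → Set X), (∀ i, 0 ≤ l i) → (∑ i, l i) = 1 →
        (∀ i, IsSlice X (S i)) → δ ≤ Metric.diam (comboSet X l S)) ∧
      ∀ ε > (0 : ℝ), ∃ S : Set X, IsSlice X S ∧ Metric.diam S ≤ δ + ε := by
  refine ⟨Xsp δ, inferInstance, inferInstance, inferInstance, inferInstance,
    fun n l S hl hsum hS => big_diam δ hδ₀ hδ₂ n l S hl hsum hS,
    fun ε hε => small_slice δ hδ₀ hδ₂ hε⟩
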